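/- For an odd prime p, in R = F_p[x]/(x^p − 1) with ψ(x) = ((1−x)^{p−1} − (1 + x + ⋯ + x^{p−1}))/p, one has ψ(x)^p = −1 in R. -/

import Mathlib

open Polynomial

theorem stmt9 (p : ℕ) (hp : p.Prime) (hodd : Odd p) (q : Polynomial ℤ)
    (hq : C (p : ℤ) * q = (1 - X) ^ (p - 1) - ∑ i ∈ Finset.range p, X ^ i) :
    ((Ideal.Quotient.mk (Ideal.span {(X : Polynomial (ZMod p)) ^ p - 1}))
        (q.map (Int.castRingHom (ZMod p)))) ^ p = -1 := by
  haveI : Fact p.Prime := ⟨hp⟩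
  set I := Ideal.span {(X : Polynomial (ZMod p)) ^ p - 1}
  set f := q.map (Int.castRingHom (ZMod p)) with hf
  -- q.eval 1 = -1
  have hq1 : q.eval 1 = -1 := by
    have h := congrArg (Polynomial.eval 1) hq
    simp [eval_pow, eval_finset_sum, Nat.sub_ne_zero_of_lt hp.one_lt] at h
    have hpne : (p : ℤ) ≠ 0 := by exact_mod_cast hp.ne_zero
    have : (p : ℤ) * q.eval 1 = (p : ℤ) * (-1) := by linarith
    exact mul_left_cancel₀ hpne this
  -- f ^ p = expand p f
  have hfp : f ^ p = expand (ZMod p) p f := by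
    rw [← Polynomial.map_frobenius_expand (p := p) f, ZMod.frobenius_zmod, Polynomial.map_id]
  have hXp : (Ideal.Quotient.mk I ((X : Polynomial (ZMod p)) ^ p)) = 1 := by
    rw [← sub_eq_zero, ← map_one (Ideal.Quotient.mk I), ← map_sub,
      Ideal.Quotient.eq_zero_iff_mem]
    exact Ideal.subset_span rfl
  -- rewrite mk as aeval
  have key : ∀ g : Polynomial (ZMod p),
      Ideal.Quotient.mk I g = aeval (Ideal.Quotient.mk I (X : Polynomial (ZMod p))) g := by
    intro g
    simpa using (Polynomial.aeval_algHom_apply (Ideal.Quotient.mkₐ (ZMod p) I) X g).symm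
  rw [← map_pow, hfp, key, Polynomial.expand_aeval, ← map_pow, hXp]
  have : aeval (1 : Polynomial (ZMod p) ⧸ I) f = algebraMap _ _ (f.eval 1) := by
    rw [aeval_def, eval₂_at_one]
  rw [this]
  have : f.eval 1 = -1 := by
    rw [hf, eval_map, eval₂_at_one, hq1]
    simp
  rw [this, map_neg, map_one]
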